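/- Let X_1,...,X_n be i.i.d. with density α x^{-α-1}·1{x ≥ 1}, and a_n^α = n^γ log n with γ ∈ (0,1). Then P(max_{2≤i≤n} X_1 X_i > a_n) → 1 as n → ∞, i.e. asymptotically every vertex is non-isolated. -/

import Mathlib

open MeasureTheory Filter Real Set

noncomputable def paretoMeasure (α : ℝ) : Measure ℝ :=
  MeasureTheory.volume.withDensity
    (fun x => ENNReal.ofReal (if 1 ≤ x then α * x ^ (-α - 1) else 0))

noncomputable def aSeq (α γ : ℝ) (n : ℕ) : ℝ := ((n : ℝ) ^ γ * Real.log n) ^ (1/α)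

lemma pareto_lintegral {α : ℝ} (hα : 0 < α) {t : ℝ} (ht : 1 ≤ t) :
    ∫⁻ x in Ioi t, ENNReal.ofReal (α * x ^ (-α - 1)) = ENNReal.ofReal (t ^ (-α)) := by
  have h1 : (-α - 1 : ℝ) < -1 := by linarith
  have h0 : (0:ℝ) < t := zero_lt_one.trans_le ht
  have hint : IntegrableOn (fun x : ℝ => α * x ^ (-α - 1)) (Ioi t) :=
    (integrableOn_Ioi_rpow_of_lt h1 h0).const_mul α
  rw [← ofReal_integral_eq_lintegral_ofReal hint ?_]
  · rw [integral_const_mul α _, integral_Ioi_rpow_of_lt h1 h0]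
    congr 1
    have h2 : (-α - 1) + 1 = -α := by ring
    rw [h2]
    field_simp
  · refine (ae_restrict_iff' measurableSet_Ioi).2 (ae_of_all _ fun x hx => ?_)
    exact mul_nonneg hα.le (Real.rpow_nonneg (le_of_lt (h0.trans hx)) _)

lemma pareto_tail {α : ℝ} (hα : 0 < α) {t : ℝ} (ht : 1 ≤ t) :
    paretoMeasure α (Ioi t) = ENNReal.ofReal (t ^ (-α)) := by
  rw [paretoMeasure, withDensity_apply _ measurableSet_Ioi,
    setLIntegral_congr_fun measurableSet_Ioi
      (fun ⦃x⦄ (hx : x ∈ Ioi t) => by rw [if_pos (ht.trans hx.le)])]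
  exact pareto_lintegral hα ht

lemma pareto_univ {α : ℝ} (hα : 0 < α) : paretoMeasure α univ = 1 := by
  rw [paretoMeasure, withDensity_apply _ MeasurableSet.univ, Measure.restrict_univ]
  have h : (fun x : ℝ => ENNReal.ofReal (if 1 ≤ x then α * x ^ (-α - 1) else 0))
      = (Ici (1:ℝ)).indicator (fun x => ENNReal.ofReal (α * x ^ (-α - 1))) := by
    funext x
    by_cases h1 : 1 ≤ x <;> simp [indicator, h1]
  rw [h, lintegral_indicator measurableSet_Ici, ← setLIntegral_congr Ioi_ae_eq_Ici,
    pareto_lintegral hα le_rfl]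
  norm_num

lemma pareto_prob {α : ℝ} (hα : 0 < α) : IsProbabilityMeasure (paretoMeasure α) :=
  ⟨pareto_univ hα⟩

lemma pareto_Iio_one {α : ℝ} : paretoMeasure α (Iio 1) = 0 := by
  rw [paretoMeasure, withDensity_apply _ measurableSet_Iio,
    setLIntegral_congr_fun measurableSet_Iio
      (fun ⦃x⦄ (hx : x ∈ Iio 1) => by rw [if_neg (not_le.2 hx)]),
    lintegral_const]
  simp

lemma pareto_Ici_one {α : ℝ} (hα : 0 < α) : paretoMeasure α (Ici 1) = 1 := by
  haveI := pareto_prob hα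
  have := prob_compl_eq_one_sub (μ := paretoMeasure α) (measurableSet_Iio (a := (1:ℝ)))
  rw [compl_Iio, pareto_Iio_one] at this
  simpa using this

lemma pareto_Iic {α : ℝ} (hα : 0 < α) {t : ℝ} (ht : 1 ≤ t) :
    paretoMeasure α (Iic t) = 1 - ENNReal.ofReal (t ^ (-α)) := by
  haveI := pareto_prob hα
  have := prob_compl_eq_one_sub (μ := paretoMeasure α) (measurableSet_Ioi (a := t))
  rw [compl_Ioi, pareto_tail hα ht] at this
  exact this

theorem stmt4 (α γ : ℝ) (hα : 0 < α) (hγ1 : 0 < γ) (hγ2 : γ < 1) :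
    Tendsto (fun n : ℕ =>
      (((paretoMeasure α).prod (Measure.pi fun _ : Fin (n-1) => paretoMeasure α))
        {p : ℝ × (Fin (n-1) → ℝ) | ∃ i, p.1 * p.2 i > aSeq α γ n}).toReal)
      atTop (nhds 1) := by
  haveI := pareto_prob hα
  set b : ℕ → ℝ := fun n => (n : ℝ) ^ γ * Real.log n with hb
  set ε : ℝ := (1 - γ) / 2 with hε
  have hε0 : 0 < ε := by rw [hε]; linarith
  -- eventual facts for n ≥ 3
  have hb1 : ∀ n : ℕ, 3 ≤ n → 1 ≤ b n := by
    intro n hn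
    have hn3 : (3:ℝ) ≤ (n:ℝ) := by exact_mod_cast hn
    have h1 : (1:ℝ) ≤ (n:ℝ) ^ γ := by
      calc (1:ℝ) = (1:ℝ) ^ γ := (Real.one_rpow γ).symm
      _ ≤ (n:ℝ) ^ γ := Real.rpow_le_rpow zero_le_one (by linarith) hγ1.le
    have h2 : (1:ℝ) ≤ Real.log n := by
      rw [Real.le_log_iff_exp_le (by linarith)]
      calc Real.exp 1 ≤ 2.7182818286 := Real.exp_one_lt_d9.le
        _ ≤ (n:ℝ) := by linarith
    calc (1:ℝ) = 1 * 1 := by ring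
      _ ≤ b n := mul_le_mul h1 h2 zero_le_one (by linarith)
  have ha1 : ∀ n : ℕ, 3 ≤ n → 1 ≤ aSeq α γ n := by
    intro n hn
    calc (1:ℝ) = (1:ℝ) ^ (1/α) := (Real.one_rpow _).symm
      _ ≤ aSeq α γ n := Real.rpow_le_rpow zero_le_one (hb1 n hn) (by positivity)
  have hainv : ∀ n : ℕ, 3 ≤ n → (aSeq α γ n) ^ (-α) = (b n)⁻¹ := by
    intro n hn
    have hb0 : (0:ℝ) ≤ b n := by linarith [hb1 n hn]
    rw [aSeq, ← Real.rpow_mul hb0]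
    have : 1/α * (-α) = -1 := by field_simp
    rw [this, Real.rpow_neg_one]
  set q : ℕ → ℝ := fun n => 1 - (b n)⁻¹ with hq
  -- (n-1) * (b n)⁻¹ → ∞
  have hmain : Tendsto (fun n : ℕ => ((n-1:ℕ):ℝ) * (b n)⁻¹) atTop atTop := by
    have hg : Tendsto (fun n : ℕ => ε/2 * (n:ℝ) ^ ε) atTop atTop :=
      ((tendsto_rpow_atTop hε0).comp tendsto_natCast_atTop_atTop).const_mul_atTop (by positivity)
    refine tendsto_atTop_mono' atTop ?_ hg
    filter_upwards [eventually_ge_atTop 3] with n hn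
    have hn3 : (3:ℝ) ≤ (n:ℝ) := by exact_mod_cast hn
    have hnpos : (0:ℝ) < (n:ℝ) := by linarith
    have hbpos : (0:ℝ) < b n := by linarith [hb1 n hn]
    have hbu : b n ≤ (n:ℝ) ^ (γ + ε) / ε := by
      have hlog : Real.log n ≤ (n:ℝ) ^ ε / ε := Real.log_le_rpow_div (Nat.cast_nonneg n) hε0
      calc b n ≤ (n:ℝ) ^ γ * ((n:ℝ) ^ ε / ε) := by
            exact mul_le_mul_of_nonneg_left hlog (Real.rpow_nonneg hnpos.le γ)
        _ = (n:ℝ) ^ (γ + ε) / ε := by rw [Real.rpow_add hnpos]; ring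
    have hbinv : ε * (n:ℝ) ^ (-(γ + ε)) ≤ (b n)⁻¹ := by
      have h1 : ((n:ℝ) ^ (γ + ε) / ε)⁻¹ ≤ (b n)⁻¹ := inv_anti₀ hbpos hbu
      calc ε * (n:ℝ) ^ (-(γ + ε)) = ((n:ℝ) ^ (γ + ε) / ε)⁻¹ := by
            rw [Real.rpow_neg hnpos.le]; field_simp
        _ ≤ (b n)⁻¹ := h1
    have hn1 : (n:ℝ)/2 ≤ ((n-1:ℕ):ℝ) := by
      rw [Nat.cast_sub (by omega)]
      push_cast
      linarith
    have hrw : ε/2 * (n:ℝ) ^ ε = (n:ℝ)/2 * (ε * (n:ℝ) ^ (-(γ + ε))) := by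
      have h2 : (n:ℝ) ^ ε = (n:ℝ) ^ (1 + -(γ + ε)) := by
        congr 1
        rw [hε]; ring
      rw [h2, Real.rpow_add hnpos, Real.rpow_one]
      ring
    rw [hrw]
    exact mul_le_mul hn1 hbinv (by positivity) (by positivity)
  -- q n ^ (n-1) → 0
  have hkey : Tendsto (fun n : ℕ => q n ^ (n-1)) atTop (nhds 0) := by
    have hexp : Tendsto (fun n : ℕ => Real.exp (-(((n-1:ℕ):ℝ) * (b n)⁻¹))) atTop (nhds 0) :=
      Real.tendsto_exp_atBot.comp (tendsto_neg_atTop_atBot.comp hmain)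
    refine squeeze_zero' ?_ ?_ hexp
    · filter_upwards [eventually_ge_atTop 3] with n hn
      have : (b n)⁻¹ ≤ 1 := inv_le_one_of_one_le₀ (hb1 n hn)
      have : 0 ≤ q n := by simp only [hq]; linarith
      positivity
    · filter_upwards [eventually_ge_atTop 3] with n hn
      have h0q : 0 ≤ q n := by
        have : (b n)⁻¹ ≤ 1 := inv_le_one_of_one_le₀ (hb1 n hn)
        simp only [hq]; linarith
      have hqe : q n ≤ Real.exp (-(b n)⁻¹) := by
        have := Real.add_one_le_exp (-(b n)⁻¹)
        simp only [hq]; linarith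
      calc q n ^ (n-1) ≤ Real.exp (-(b n)⁻¹) ^ (n-1) := pow_le_pow_left₀ h0q hqe (n-1)
        _ = Real.exp (-(((n-1:ℕ):ℝ) * (b n)⁻¹)) := by
          rw [← Real.exp_nat_mul]
          ring_nf
  have hlow : Tendsto (fun n : ℕ => 1 - q n ^ (n-1)) atTop (nhds 1) := by
    have h1 : Tendsto (fun _ : ℕ => (1:ℝ)) atTop (nhds 1) := tendsto_const_nhds
    simpa using h1.sub hkey
  refine tendsto_of_tendsto_of_tendsto_of_le_of_le' hlow tendsto_const_nhds ?_ ?_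
  · -- lower bound
    filter_upwards [eventually_ge_atTop 3] with n hn
    set a := aSeq α γ n with hadef
    set μ := paretoMeasure α with hμ
    set pm := Measure.pi fun _ : Fin (n-1) => μ with hπ
    have hTset : {y : Fin (n-1) → ℝ | ∀ i, y i ≤ a} = Set.pi univ (fun _ => Iic a) := by
      ext y; simp [Set.mem_pi, Pi.le_def]
    have hTmeas : MeasurableSet {y : Fin (n-1) → ℝ | ∀ i, y i ≤ a} := by
      rw [hTset]; exact MeasurableSet.univ_pi fun i => measurableSet_Iic
    have hsub : (Ici (1:ℝ)) ×ˢ {y : Fin (n-1) → ℝ | ∀ i, y i ≤ a}ᶜ ⊆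
        {p : ℝ × (Fin (n-1) → ℝ) | ∃ i, p.1 * p.2 i > a} := by
      rintro ⟨x, y⟩ ⟨hx, hy⟩
      simp only [Set.mem_compl_iff, Set.mem_setOf_eq, not_forall, not_le] at hy
      obtain ⟨i, hi⟩ := hy
      have ha0 : (0:ℝ) < a := lt_of_lt_of_le one_pos (ha1 n hn)
      exact ⟨i, lt_of_lt_of_le hi (le_mul_of_one_le_left (le_of_lt (ha0.trans hi)) hx)⟩
    have h0binv : (0:ℝ) ≤ (b n)⁻¹ := by
      have := hb1 n hn; positivity
    have h0q : 0 ≤ q n := by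
      have : (b n)⁻¹ ≤ 1 := inv_le_one_of_one_le₀ (hb1 n hn)
      simp only [hq]; linarith
    have hq1 : q n ≤ 1 := by simp only [hq]; linarith
    have hIic : μ (Iic a) = ENNReal.ofReal (q n) := by
      rw [hμ, pareto_Iic hα (ha1 n hn), hainv n hn]
      simp only [hq]
      rw [ENNReal.ofReal_sub _ h0binv, ENNReal.ofReal_one]
    have hcompl : pm {y : Fin (n-1) → ℝ | ∀ i, y i ≤ a}ᶜ
        = 1 - ENNReal.ofReal (q n ^ (n-1)) := by
      rw [prob_compl_eq_one_sub hTmeas, hTset, hπ, Measure.pi_pi]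
      simp only [Finset.prod_const, Finset.card_univ, Fintype.card_fin]
      rw [hIic, ← ENNReal.ofReal_pow h0q]
    have hprod : (μ.prod pm) ((Ici (1:ℝ)) ×ˢ {y : Fin (n-1) → ℝ | ∀ i, y i ≤ a}ᶜ)
        = 1 - ENNReal.ofReal (q n ^ (n-1)) := by
      rw [Measure.prod_prod, hμ, pareto_Ici_one hα, hcompl, one_mul]
    have hle1 : ENNReal.ofReal (q n ^ (n-1)) ≤ 1 := by
      rw [← ENNReal.ofReal_one]
      exact ENNReal.ofReal_le_ofReal (pow_le_one₀ h0q hq1)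
    have htr : ((μ.prod pm) ((Ici (1:ℝ)) ×ˢ {y : Fin (n-1) → ℝ | ∀ i, y i ≤ a}ᶜ)).toReal
        = 1 - q n ^ (n-1) := by
      rw [hprod, ENNReal.toReal_sub_of_le hle1 ENNReal.one_ne_top, ENNReal.toReal_one,
        ENNReal.toReal_ofReal (by positivity)]
    calc 1 - q n ^ (n-1)
        = ((μ.prod pm) ((Ici (1:ℝ)) ×ˢ {y : Fin (n-1) → ℝ | ∀ i, y i ≤ a}ᶜ)).toReal := htr.symm
      _ ≤ _ := ENNReal.toReal_mono (measure_ne_top _ _) (measure_mono hsub)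
  · -- upper bound by 1
    filter_upwards with n
    have h1 : ((paretoMeasure α).prod (Measure.pi fun _ : Fin (n-1) => paretoMeasure α))
        {p : ℝ × (Fin (n-1) → ℝ) | ∃ i, p.1 * p.2 i > aSeq α γ n} ≤ 1 := prob_le_one
    have := ENNReal.toReal_mono ENNReal.one_ne_top h1
    simpa using this
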